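/- (Lower bound for the wiggly-dissipation cell functional.) Let μ : ℝ → ℝ be continuous, 1-periodic, with 0 < m ≤ μ(y) for all y. Let v ∈ ℝ with v ≠ 0, ξ ∈ ℝ, and let z : [0,1] → ℝ be continuously differentiable with z(1) = z(0) + sign(v). Then ∫₀¹ [ μ(z(s)) (v z′(s))² / 2 + ξ² / (2 μ(z(s))) ] ds ≥ ξ v. -/

import Mathlib

open MeasureTheory intervalIntegral

/-- **Lower bound for the wiggly-dissipation cell functional.**
For `μ` continuous, 1-periodic and bounded below by `m > 0`, any `v ≠ 0`, `ξ ∈ ℝ`, and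
any `C¹` curve `z : [0,1] → ℝ` with `z(1) = z(0) + sign v`, one has
`∫₀¹ [μ(z)(v z′)²/2 + ξ²/(2μ(z))] ds ≥ ξ v`. -/
theorem statement9 (μ : ℝ → ℝ) (hμcont : Continuous μ) (hμper : ∀ y, μ (y + 1) = μ y)
    (m : ℝ) (hm : 0 < m) (hμlb : ∀ y, m ≤ μ y)
    (v ξ : ℝ) (hv : v ≠ 0)
    (z : ℝ → ℝ) (hz : ContDiffOn ℝ 1 z (Set.Icc 0 1))
    (hbc : z 1 = z 0 + Real.sign v) :
    ξ * v ≤ ∫ s in (0:ℝ)..1,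
      (μ (z s) * (v * derivWithin z (Set.Icc 0 1) s) ^ 2 / 2 + ξ ^ 2 / (2 * μ (z s))) := by
  set z' : ℝ → ℝ := derivWithin z (Set.Icc 0 1) with hz'
  have huIcc : Set.uIcc (0:ℝ) 1 = Set.Icc 0 1 := Set.uIcc_of_le zero_le_one
  have hzc : ContinuousOn z (Set.Icc 0 1) := hz.continuousOn
  have hz'c : ContinuousOn z' (Set.Icc 0 1) :=
    hz.continuousOn_derivWithin (uniqueDiffOn_Icc zero_lt_one) le_rfl
  have hμpos : ∀ y, 0 < μ y := fun y => hm.trans_le (hμlb y)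
  -- FTC: ∫ z' = sign v
  have hftc : (∫ s in (0:ℝ)..1, z' s) = Real.sign v := by
    rw [intervalIntegral.integral_eq_sub_of_hasDeriv_right_of_le zero_le_one hzc
      (fun x hx => by
        have hd : HasDerivWithinAt z (z' x) (Set.Icc 0 1) x :=
          (hz.differentiableOn one_ne_zero x (Set.mem_Icc.2 ⟨hx.1.le, hx.2.le⟩)).hasDerivWithinAt
        exact hd.mono_of_mem_nhdsWithin (Icc_mem_nhdsGT_of_mem ⟨hx.1.le, hx.2⟩))
      (by rw [← huIcc] at hz'c; exact hz'c.intervalIntegrable), hbc]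
    ring
  have hint1 : IntervalIntegrable (fun s => |ξ * (v * z' s)|) volume 0 1 := by
    apply ContinuousOn.intervalIntegrable
    rw [huIcc]; exact ((hz'c.const_smul v).const_smul ξ).abs
  have hint1' : IntervalIntegrable (fun s => ξ * (v * z' s)) volume 0 1 := by
    apply ContinuousOn.intervalIntegrable
    rw [huIcc]; exact (hz'c.const_smul v).const_smul ξ
  have hint2 : IntervalIntegrable
      (fun s => μ (z s) * (v * z' s) ^ 2 / 2 + ξ ^ 2 / (2 * μ (z s))) volume 0 1 := by
    apply ContinuousOn.intervalIntegrable
    rw [huIcc]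
    apply ContinuousOn.add
    · exact (((hμcont.comp_continuousOn hzc).mul ((hz'c.const_smul v).pow 2)).div_const 2)
    · exact ContinuousOn.div continuousOn_const
        (continuousOn_const.mul (hμcont.comp_continuousOn hzc))
        (fun x _ => by have := hμpos (z x); positivity)
  -- pointwise bound
  have hpt : ∀ s ∈ Set.uIcc (0:ℝ) 1,
      |ξ * (v * z' s)| ≤ μ (z s) * (v * z' s) ^ 2 / 2 + ξ ^ 2 / (2 * μ (z s)) := by
    intro s _
    set x := v * z' s
    have ha : 0 < μ (z s) := hμpos _
    have habs : |ξ * x| = |ξ| * |x| := abs_mul _ _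
    rw [habs]
    rw [div_add_div _ _ (two_ne_zero) (by positivity), le_div_iff₀ (by positivity)]
    nlinarith [sq_nonneg (μ (z s) * |x| - |ξ|), sq_abs x, sq_abs ξ, abs_nonneg x,
      abs_nonneg ξ, mul_pos ha ha]
  have hmono := intervalIntegral.integral_mono_on zero_le_one hint1 hint2
    (fun s hs => hpt s (by rwa [huIcc]))
  have hval : (∫ s in (0:ℝ)..1, ξ * (v * z' s)) = ξ * v * Real.sign v := by
    have h1 : (∫ s in (0:ℝ)..1, ξ * (v * z' s)) = (ξ * v) * ∫ s in (0:ℝ)..1, z' s := by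
      rw [← intervalIntegral.integral_const_mul]
      congr 1; ext s; ring
    rw [h1, hftc]
  refine le_trans ?_ hmono
  have h2 : |∫ s in (0:ℝ)..1, ξ * (v * z' s)| ≤ ∫ s in (0:ℝ)..1, |ξ * (v * z' s)| :=
    intervalIntegral.abs_integral_le_integral_abs zero_le_one
  refine le_trans ?_ h2
  rw [hval]
  calc ξ * v ≤ |ξ * v| := le_abs_self _
    _ ≤ |ξ * v * Real.sign v| := by
        rcases lt_or_gt_of_ne hv with h | h
        · rw [Real.sign_of_neg h]; simp [abs_mul]
        · rw [Real.sign_of_pos h, mul_one]
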